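/- arXiv:1507.05751 — 4 statements merged into one kernel-verified Lean document; each statement's English description precedes it below -/
import Mathlib

section
/- Let m = 2l and n = 2t be even positive integers, σ a permutation of Z_2^t, and g : Z_2^t → Z_m any function. Then the function f : Z_2^t × Z_2^t → Z_m defined by f(x,y) = g(y) + l·(x · σ(y)) is a generalized bent function of type {m, n}. -/
open Finset

/-- The primitive `m`-th root of unity `e^{2πi/m}`. -/
noncomputable def zeta (m : ℕ) : ℂ := Complex.exp (2 * Real.pi * Complex.I / m)

/-- The inner product `x·y = Σ xᵢ yᵢ` in `Z₂`. -/
def bdot {n : ℕ} (x y : Fin n → ZMod 2) : ZMod 2 := ∑ i, x i * y i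

/-- The Fourier coefficient `W_f(y) = Σ_x (-1)^{x·y} ζ_m^{f(x)}`. -/
noncomputable def Wf {n m : ℕ} (f : (Fin n → ZMod 2) → ZMod m) (y : Fin n → ZMod 2) : ℂ :=
  ∑ x : Fin n → ZMod 2, (-1 : ℂ) ^ (bdot x y).val * zeta m ^ (f x).val

/-- `f : Z₂ⁿ → Z_m` is a generalized bent function of type `{m,n}` if
`|W_f(y)| = 2^{n/2}` for all `y`. -/
def IsGBF {n m : ℕ} (f : (Fin n → ZMod 2) → ZMod m) : Prop :=
  ∀ y : Fin n → ZMod 2, ‖Wf f y‖ = (2 : ℝ) ^ ((n : ℝ) / 2)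

lemma neg_one_pow_mod_two (n : ℕ) : (-1:ℂ) ^ (n % 2) = (-1) ^ n := by
  conv_rhs => rw [← Nat.mod_add_div n 2, pow_add, pow_mul]
  norm_num

lemma sign_add (a b : ZMod 2) :
    (-1:ℂ) ^ ((a + b).val) = (-1) ^ a.val * (-1) ^ b.val := by
  rw [ZMod.val_add, neg_one_pow_mod_two, pow_add]

lemma zeta_pow_self {m : ℕ} (hm : m ≠ 0) : zeta m ^ m = 1 := by
  rw [zeta, ← Complex.exp_nat_mul]
  have h : (m:ℂ) ≠ 0 := Nat.cast_ne_zero.mpr hm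
  have : (m:ℂ) * (2 * Real.pi * Complex.I / m) = 2 * Real.pi * Complex.I := by
    field_simp
  rw [this, Complex.exp_two_pi_mul_I]

lemma zeta_val_add {m : ℕ} [NeZero m] (a b : ZMod m) :
    zeta m ^ (a + b).val = zeta m ^ a.val * zeta m ^ b.val := by
  rw [ZMod.val_add, ← pow_add]
  conv_rhs => rw [← Nat.mod_add_div (a.val + b.val) m, pow_add, pow_mul,
    zeta_pow_self (NeZero.ne m), one_pow, mul_one]

lemma abs_zeta (m : ℕ) : ‖zeta m‖ = 1 := by
  rw [zeta]
  rw [show (2 * (Real.pi:ℂ) * Complex.I / m) = ((2 * Real.pi / m : ℝ):ℂ) * Complex.I by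
    push_cast; ring]
  rw [Complex.norm_exp]
  simp

lemma zeta_pow_l {l : ℕ} (hl : 1 ≤ l) : zeta (2*l) ^ l = -1 := by
  rw [zeta, ← Complex.exp_nat_mul]
  have h : (l:ℂ) ≠ 0 := Nat.cast_ne_zero.mpr (by omega)
  have : (l:ℂ) * (2 * Real.pi * Complex.I / ((2*l : ℕ):ℂ)) = Real.pi * Complex.I := by
    push_cast
    field_simp
  rw [this, Complex.exp_pi_mul_I]

lemma zeta_l_mul {l : ℕ} (hl : 1 ≤ l) (w : ZMod 2) :
    zeta (2*l) ^ (((l : ZMod (2*l)) * ((w.val : ℕ) : ZMod (2*l))).val) = (-1:ℂ) ^ w.val := by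
  haveI : NeZero (2*l) := ⟨by omega⟩
  have hw : w.val = 0 ∨ w.val = 1 := by
    have := ZMod.val_lt w; omega
  rcases hw with h | h <;> rw [h]
  · simp
  · have h1 : ((l : ZMod (2*l)) * ((1:ℕ) : ZMod (2*l))) = ((l:ℕ) : ZMod (2*l)) := by
      push_cast; ring
    rw [h1, ZMod.val_natCast, Nat.mod_eq_of_lt (by omega)]
    simpa using zeta_pow_l hl

lemma bdot_add_left {t : ℕ} (x y c : Fin t → ZMod 2) :
    bdot (x + y) c = bdot x c + bdot y c := by
  simp [bdot, add_mul, Finset.sum_add_distrib]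

lemma bdot_add_right {t : ℕ} (x c d : Fin t → ZMod 2) :
    bdot x (c + d) = bdot x c + bdot x d := by
  simp [bdot, mul_add, Finset.sum_add_distrib]

lemma orth {t : ℕ} (c : Fin t → ZMod 2) :
    ∑ x : Fin t → ZMod 2, (-1:ℂ) ^ ((bdot x c).val) =
      if c = 0 then (2:ℂ)^t else 0 := by
  split_ifs with hc
  · subst hc
    have h0 : ∀ x : Fin t → ZMod 2, bdot x 0 = 0 := by intro x; simp [bdot]
    simp only [h0, ZMod.val_zero, pow_zero, Finset.sum_const, Finset.card_univ, nsmul_eq_mul,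
      mul_one]
    simp [Fintype.card_fun]
  · obtain ⟨i₀, hi₀⟩ : ∃ i, c i ≠ 0 := by
      by_contra h; push_neg at h; exact hc (funext h)
    have hc1 : c i₀ = 1 := by
      have : ∀ p : ZMod 2, p ≠ 0 → p = 1 := by decide
      exact this _ hi₀
    set d : Fin t → ZMod 2 := Pi.single i₀ 1 with hd
    have hbd : bdot d c = 1 := by
      rw [bdot, Fintype.sum_eq_single i₀]
      · simp [hd, hc1]
      · intro i hi; simp [hd, Pi.single_eq_of_ne hi]
    have key : ∀ x : Fin t → ZMod 2,
        (-1:ℂ) ^ ((bdot (x + d) c).val) = -((-1:ℂ) ^ ((bdot x c).val)) := by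
      intro x
      rw [bdot_add_left, hbd, sign_add]
      have h1 : ((1:ZMod 2)).val = 1 := rfl
      rw [h1]; ring
    have hre : ∑ x : Fin t → ZMod 2, (-1:ℂ) ^ ((bdot (x + d) c).val)
        = ∑ x : Fin t → ZMod 2, (-1:ℂ) ^ ((bdot x c).val) :=
      Fintype.sum_equiv (Equiv.addRight d) _ _ (fun x => rfl)
    have : ∑ x : Fin t → ZMod 2, (-1:ℂ) ^ ((bdot x c).val)
        + ∑ x : Fin t → ZMod 2, (-1:ℂ) ^ ((bdot x c).val) = 0 := by
      nth_rewrite 1 [← hre]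
      rw [← Finset.sum_add_distrib]
      simp [key]
    exact add_self_eq_zero.mp this

theorem stmt2 {l t : ℕ} (hl : 1 ≤ l) (ht : 1 ≤ t)
    (σ : Equiv.Perm (Fin t → ZMod 2)) (g : (Fin t → ZMod 2) → ZMod (2 * l)) :
    IsGBF (fun z : Fin (t + t) → ZMod 2 =>
      g (fun i => z (Fin.natAdd t i)) +
        (l : ZMod (2 * l)) *
          (((bdot (fun i => z (Fin.castAdd t i))
              (σ (fun i => z (Fin.natAdd t i)))).val : ℕ) : ZMod (2 * l))) := by
  intro y
  haveI : NeZero (2*l) := ⟨by omega⟩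
  set a : Fin t → ZMod 2 := fun i => y (Fin.castAdd t i) with ha
  set b : Fin t → ZMod 2 := fun i => y (Fin.natAdd t i) with hb
  let e : ((Fin t → ZMod 2) × (Fin t → ZMod 2)) ≃ (Fin (t+t) → ZMod 2) :=
    (Equiv.sumArrowEquivProdArrow (Fin t) (Fin t) (ZMod 2)).symm.trans
      (Equiv.arrowCongr finSumFinEquiv (Equiv.refl (ZMod 2)))
  have he1 : ∀ (x u : Fin t → ZMod 2) (i : Fin t),
      e (x, u) (Fin.castAdd t i) = x i := by
    intro x u i
    show Sum.elim x u (finSumFinEquiv.symm (Fin.castAdd t i)) = x i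
    rw [finSumFinEquiv_symm_apply_castAdd]; rfl
  have he2 : ∀ (x u : Fin t → ZMod 2) (i : Fin t),
      e (x, u) (Fin.natAdd t i) = u i := by
    intro x u i
    show Sum.elim x u (finSumFinEquiv.symm (Fin.natAdd t i)) = u i
    rw [finSumFinEquiv_symm_apply_natAdd]; rfl
  have hfst : ∀ (x u : Fin t → ZMod 2),
      (fun i => e (x, u) (Fin.castAdd t i)) = x := fun x u => funext (he1 x u)
  have hsnd : ∀ (x u : Fin t → ZMod 2),
      (fun i => e (x, u) (Fin.natAdd t i)) = u := fun x u => funext (he2 x u)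
  have hbdot : ∀ (x u : Fin t → ZMod 2),
      bdot (e (x, u)) y = bdot x a + bdot u b := by
    intro x u
    rw [bdot, Fin.sum_univ_add]
    congr 1
    · apply Finset.sum_congr rfl; intro i _; rw [he1]
    · apply Finset.sum_congr rfl; intro i _; rw [he2]
  rw [Wf, ← Equiv.sum_comp e, Fintype.sum_prod_type]
  have hterm : ∀ (x u : Fin t → ZMod 2),
      (-1 : ℂ) ^ (bdot (e (x, u)) y).val *
        zeta (2*l) ^ ((g (fun i => e (x,u) (Fin.natAdd t i)) +
          (l : ZMod (2 * l)) *
            (((bdot (fun i => e (x,u) (Fin.castAdd t i))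
              (σ (fun i => e (x,u) (Fin.natAdd t i)))).val : ℕ) : ZMod (2 * l))).val)
      = ((-1:ℂ) ^ (bdot u b).val * zeta (2*l) ^ (g u).val) *
          (-1:ℂ) ^ ((bdot x (a + σ u)).val) := by
    intro x u
    rw [hbdot, hfst, hsnd, sign_add, zeta_val_add, zeta_l_mul hl,
      bdot_add_right, sign_add]
    ring
  calc ‖(∑ x : Fin t → ZMod 2, ∑ u : Fin t → ZMod 2,
        (-1 : ℂ) ^ (bdot (e (x, u)) y).val *
        zeta (2*l) ^ ((g (fun i => e (x,u) (Fin.natAdd t i)) +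
          (l : ZMod (2 * l)) *
            (((bdot (fun i => e (x,u) (Fin.castAdd t i))
              (σ (fun i => e (x,u) (Fin.natAdd t i)))).val : ℕ) : ZMod (2 * l))).val))‖
      = ‖(∑ u : Fin t → ZMod 2,
          ((-1:ℂ) ^ (bdot u b).val * zeta (2*l) ^ (g u).val) *
          ∑ x : Fin t → ZMod 2, (-1:ℂ) ^ ((bdot x (a + σ u)).val))‖ := by
        rw [Finset.sum_comm]
        congr 1
        apply Finset.sum_congr rfl
        intro u _
        rw [Finset.mul_sum]
        apply Finset.sum_congr rfl
        intro x _
        exact hterm x u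
    _ = ‖(((-1:ℂ) ^ (bdot (σ.symm a) b).val *
          zeta (2*l) ^ (g (σ.symm a)).val) * (2:ℂ)^t)‖ := by
        congr 1
        have hiff : ∀ u : Fin t → ZMod 2, (a + σ u = 0) ↔ (u = σ.symm a) := by
          intro u
          have h2 : ∀ p q : ZMod 2, p + q = 0 ↔ q = p := by decide
          constructor
          · intro h
            have : σ u = a := by
              funext i
              have := congrFun h i
              exact (h2 (a i) (σ u i)).mp this
            simpa using congrArg σ.symm this
          · intro h
            subst h
            funext i
            simp [h2]
        have : ∀ u : Fin t → ZMod 2,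
            ((-1:ℂ) ^ (bdot u b).val * zeta (2*l) ^ (g u).val) *
            ∑ x : Fin t → ZMod 2, (-1:ℂ) ^ ((bdot x (a + σ u)).val)
            = if u = σ.symm a then
                ((-1:ℂ) ^ (bdot u b).val * zeta (2*l) ^ (g u).val) * (2:ℂ)^t else 0 := by
          intro u
          rw [orth]
          by_cases h : u = σ.symm a
          · rw [if_pos ((hiff u).mpr h), if_pos h]
          · rw [if_neg (fun hh => h ((hiff u).mp hh)), if_neg h, mul_zero]
        rw [Finset.sum_congr rfl (fun u _ => this u)]
        simp
    _ = (2 : ℝ) ^ (((t + t : ℕ) : ℝ) / 2) := by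
        rw [norm_mul, norm_mul, norm_pow, norm_pow, norm_pow]
        rw [abs_zeta]
        simp only [norm_neg, norm_one, one_pow, one_mul]
        rw [Complex.norm_two]
        have h1 : (((t + t : ℕ) : ℝ)) / 2 = (t : ℝ) := by push_cast; ring
        rw [h1, Real.rpow_natCast]
end

section
/- If there exists a boolean bent function f : Z_2^{n+1} → Z_2, then there exists a generalized bent function F : Z_2^n → Z_4. -/
open Finset

lemma zeta_two : zeta 2 = -1 := by
  unfold zeta
  rw [show (2 * Real.pi * Complex.I / ((2:ℕ):ℂ)) = Real.pi * Complex.I by push_cast; ring]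
  exact Complex.exp_pi_mul_I

lemma zeta_four : zeta 4 = Complex.I := by
  unfold zeta
  rw [show (2 * Real.pi * Complex.I / ((4:ℕ):ℂ)) = ((Real.pi/2 : ℝ):ℂ) * Complex.I by
    push_cast; ring, Complex.exp_mul_I, ← Complex.ofReal_cos, ← Complex.ofReal_sin]
  simp [Real.cos_pi_div_two, Real.sin_pi_div_two]

lemma zmod2_cases (s : ZMod 2) : s = 0 ∨ s = 1 := by revert s; decide

lemma neg_one_pow_add (s t : ZMod 2) : (-1:ℂ)^(s+t).val = (-1)^s.val * (-1)^t.val := by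
  rcases zmod2_cases s with rfl | rfl <;> rcases zmod2_cases t with rfl | rfl <;>
    norm_num [show ((2:ZMod 2)).val = 0 from rfl, show ((1:ZMod 2)).val = 1 from rfl,
      show ((0:ZMod 2)).val = 0 from rfl]

lemma zeta4_F (a b : ZMod 2) :
    zeta 4 ^ (((3 * a.val + b.val + 2 * a.val * b.val : ℕ) : ZMod 4)).val =
    ((1+Complex.I) * (-1)^a.val + (1-Complex.I) * (-1)^b.val)/2 := by
  rw [zeta_four]
  rcases zmod2_cases a with rfl | rfl <;> rcases zmod2_cases b with rfl | rfl <;>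
    norm_num [show ((1:ZMod 2)).val = 1 from rfl, show ((0:ZMod 2)).val = 0 from rfl,
      show ((1:ZMod 4)).val = 1 from rfl, show ((3:ZMod 4)).val = 3 from rfl,
      show ((6:ZMod 4)).val = 2 from rfl, ZMod.val_natCast, pow_succ, Complex.I_sq] <;> ring

lemma sum_zmod2 {M : Type*} [AddCommMonoid M] (g : ZMod 2 → M) :
    ∑ a : ZMod 2, g a = g 0 + g 1 := Fin.sum_univ_two g

lemma bdot_cons {n : ℕ} (ε δ : ZMod 2) (x y : Fin n → ZMod 2) :
    bdot (Fin.cons ε x) (Fin.cons δ y) = ε * δ + bdot x y := by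
  unfold bdot
  rw [Fin.sum_univ_succ]
  rfl

lemma wf_split {n : ℕ} (f : (Fin (n+1) → ZMod 2) → ZMod 2) (y : Fin n → ZMod 2)
    (δ : ZMod 2) :
    Wf f (Fin.cons δ y) = ∑ x : Fin n → ZMod 2, (-1:ℂ)^(bdot x y).val *
      ((-1)^((0:ZMod 2)*δ).val * (-1:ℂ)^((f (Fin.cons 0 x)).val) +
       (-1)^((1:ZMod 2)*δ).val * (-1:ℂ)^((f (Fin.cons 1 x)).val)) := by
  unfold Wf
  rw [← Equiv.sum_comp (Fin.consEquiv (fun _ => ZMod 2)), Fintype.sum_prod_type,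
    sum_zmod2]
  rw [← Finset.sum_add_distrib]
  refine Finset.sum_congr rfl fun x _ => ?_
  simp only [Fin.consEquiv, Equiv.coe_fn_mk]
  rw [bdot_cons, bdot_cons, neg_one_pow_add, neg_one_pow_add, zeta_two]
  ring

theorem stmt3 {n : ℕ} (h : ∃ f : (Fin (n + 1) → ZMod 2) → ZMod 2, IsGBF f) :
    ∃ F : (Fin n → ZMod 2) → ZMod 4, IsGBF F := by
  obtain ⟨f, hf⟩ := h
  refine ⟨fun x => ((3 * (f (Fin.cons 0 x)).val + (f (Fin.cons 1 x)).val +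
      2 * (f (Fin.cons 0 x)).val * (f (Fin.cons 1 x)).val : ℕ) : ZMod 4), fun y => ?_⟩
  -- realness of Wf for m = 2
  have hreal : ∀ z : Fin (n+1) → ZMod 2, Wf f z =
      ((∑ x : Fin (n+1) → ZMod 2, (-1:ℝ)^(bdot x z).val * (-1:ℝ)^((f x).val) : ℝ) : ℂ) := by
    intro z
    unfold Wf
    rw [zeta_two]
    push_cast
    rfl
  set u : ℝ := ∑ x : Fin (n+1) → ZMod 2, (-1:ℝ)^(bdot x (Fin.cons 0 y)).val * (-1:ℝ)^((f x).val) with hu'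
  set v : ℝ := ∑ x : Fin (n+1) → ZMod 2, (-1:ℝ)^(bdot x (Fin.cons 1 y)).val * (-1:ℝ)^((f x).val) with hv'
  have hu : |u| = (2:ℝ) ^ (((n:ℝ)+1)/2) := by
    have := hf (Fin.cons 0 y)
    rw [hreal, Complex.norm_real, Real.norm_eq_abs] at this
    rw [this]; push_cast; ring_nf
  have hv : |v| = (2:ℝ) ^ (((n:ℝ)+1)/2) := by
    have := hf (Fin.cons 1 y)
    rw [hreal, Complex.norm_real, Real.norm_eq_abs] at this
    rw [this]; push_cast; ring_nf
  have hW : Wf (fun x => ((3 * (f (Fin.cons 0 x)).val + (f (Fin.cons 1 x)).val +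
      2 * (f (Fin.cons 0 x)).val * (f (Fin.cons 1 x)).val : ℕ) : ZMod 4)) y =
      (Wf f (Fin.cons 0 y) + Complex.I * Wf f (Fin.cons 1 y)) / 2 := by
    rw [wf_split f y 0, wf_split f y 1]
    unfold Wf
    rw [Finset.mul_sum, ← Finset.sum_add_distrib, Finset.sum_div]
    refine Finset.sum_congr rfl fun x _ => ?_
    beta_reduce
    rw [zeta4_F]
    norm_num [show ((0:ZMod 2)*0).val = 0 from rfl, show ((1:ZMod 2)*0).val = 0 from rfl,
      show ((0:ZMod 2)*1).val = 0 from rfl, show ((1:ZMod 2)*1).val = 1 from rfl,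
      show ((1:ZMod 2)).val = 1 from rfl]
    ring
  rw [hW, hreal, hreal, ← hu', ← hv']
  rw [show ((u:ℂ) + Complex.I * (v:ℂ)) = ((u:ℂ) + (v:ℂ) * Complex.I) by ring]
  rw [norm_div, Complex.norm_add_mul_I, Complex.norm_two]
  have hu2 : u^2 = (2:ℝ)^((n:ℝ)+1) := by
    rw [← sq_abs, hu, ← Real.rpow_natCast ((2:ℝ)^(((n:ℝ)+1)/2)) 2,
      ← Real.rpow_mul (by norm_num)]
    norm_num
  have hv2 : v^2 = (2:ℝ)^((n:ℝ)+1) := by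
    rw [← sq_abs, hv, ← Real.rpow_natCast ((2:ℝ)^(((n:ℝ)+1)/2)) 2,
      ← Real.rpow_mul (by norm_num)]
    norm_num
  rw [hu2, hv2]
  have e1 : (2:ℝ)^((n:ℝ)+1) = 2^((n:ℝ))*2 := by
    rw [Real.rpow_add (by norm_num : (0:ℝ)<2), Real.rpow_one]
  have e2 : ((2:ℝ)^((n:ℝ)/2))^2 = 2^((n:ℝ)) := by
    rw [← Real.rpow_natCast ((2:ℝ)^((n:ℝ)/2)) 2, ← Real.rpow_mul (by norm_num)]
    norm_num
  have key : Real.sqrt ((2:ℝ)^((n:ℝ)+1) + 2^((n:ℝ)+1)) = 2^((n:ℝ)/2) * 2 := by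
    rw [show ((2:ℝ)^((n:ℝ)+1) + 2^((n:ℝ)+1)) = ((2:ℝ)^((n:ℝ)/2) * 2)^2 by
      rw [mul_pow, e2, e1]; ring]
    exact Real.sqrt_sq (by positivity)
  rw [key]; ring
end

section
/- Let m be an odd positive integer ≥ 3 such that 2^l ≡ −1 (mod m) for some positive integer l, and let n be an odd positive integer. Then there is no algebraic integer α ∈ Z[ζ_m] with α·conj(α) = 2^n. Consequently there is no generalized bent function of type {m, n} or {2m, n}. -/
open Finset

namespace Stmt10Aux

open Polynomial

lemma zeta_prim {m : ℕ} (hm : 0 < m) : IsPrimitiveRoot (zeta m) m := by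
  simpa [zeta] using Complex.isPrimitiveRoot_exp m hm.ne'

lemma zeta_abs {m : ℕ} : ‖zeta m‖ = 1 := by
  simp [zeta, Complex.norm_exp]

lemma zeta_conj_mul {m : ℕ} : (starRingEnd ℂ) (zeta m) * zeta m = 1 := by
  rw [mul_comm, Complex.mul_conj, ← Complex.sq_norm, zeta_abs]
  norm_num

lemma zeta_ne_zero {m : ℕ} : zeta m ≠ 0 := Complex.exp_ne_zero _

/-- conj ζ = ζ^(2^l) when 2^l ≡ -1 mod m -/
lemma zeta_conj_eq_pow {m l : ℕ} (hm : 0 < m) (hl : (2 : ZMod m) ^ l = -1) :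
    (starRingEnd ℂ) (zeta m) = zeta m ^ (2 ^ l) := by
  have hdvd : m ∣ 2 ^ l + 1 := by
    have : ((2 ^ l + 1 : ℕ) : ZMod m) = 0 := by push_cast [hl]; ring
    exact (ZMod.natCast_eq_zero_iff _ _).mp this
  have h1 : zeta m ^ (2 ^ l) * zeta m = 1 := by
    have := ((zeta_prim hm).pow_eq_one_iff_dvd (2 ^ l + 1)).mpr hdvd
    rw [← this]; ring
  exact mul_right_cancel₀ zeta_ne_zero (zeta_conj_mul.trans h1.symm)

lemma conj_mem {m : ℕ} {x : ℂ} (hx : x ∈ Algebra.adjoin ℤ ({zeta m} : Set ℂ)) (hm : 0 < m) :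
    (starRingEnd ℂ) x ∈ Algebra.adjoin ℤ ({zeta m} : Set ℂ) := by
  induction hx using Algebra.adjoin_induction with
  | mem z hz =>
      rcases Set.mem_singleton_iff.mp hz with rfl
      have h1 : zeta m ^ (m - 1) * zeta m = 1 := by
        calc zeta m ^ (m - 1) * zeta m = zeta m ^ (m - 1 + 1) := by ring
        _ = 1 := by rw [Nat.sub_add_cancel hm]; exact (zeta_prim hm).pow_eq_one
      have : (starRingEnd ℂ) (zeta m) = zeta m ^ (m - 1) :=
        mul_right_cancel₀ zeta_ne_zero (zeta_conj_mul.trans h1.symm)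
      rw [this]
      exact pow_mem (Algebra.self_mem_adjoin_singleton ℤ _) _
  | algebraMap r => simpa using Subalgebra.algebraMap_mem _ r
  | add a b _ _ ha hb => rw [map_add]; exact add_mem ha hb
  | mul a b _ _ ha hb => rw [map_mul]; exact mul_mem ha hb

lemma sqf {m : ℕ} (hm : Odd m) : Squarefree (cyclotomic m (ZMod 2)) := by
  have hm2 : ((m : ZMod 2)) ≠ 0 := by
    rw [Ne, ZMod.natCast_eq_zero_iff]
    exact fun h => (Nat.not_even_iff_odd.mpr hm) (even_iff_two_dvd.mpr h)
  have hsep : (X ^ m - 1 : (ZMod 2)[X]).Separable := by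
    have := separable_X_pow_sub_C (1 : ZMod 2) hm2 one_ne_zero
    simpa using this
  exact hsep.squarefree.squarefree_of_dvd (cyclotomic.dvd_X_pow_sub_one m (ZMod 2))

lemma cyclo_dvd {m : ℕ} (hm : 0 < m) {p : ℤ[X]} (hp : aeval (zeta m) p = 0) :
    cyclotomic m ℤ ∣ p := by
  rw [cyclotomic_eq_minpoly (zeta_prim hm) hm]
  exact minpoly.isIntegrallyClosed_dvd ((zeta_prim hm).isIntegral hm) hp

lemma aeval_cyclo {m : ℕ} (hm : 0 < m) : aeval (zeta m) (cyclotomic m ℤ) = 0 := by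
  have : IsRoot (cyclotomic m ℂ) (zeta m) := by
    haveI : NeZero (m : ℂ) := ⟨Nat.cast_ne_zero.mpr hm.ne'⟩
    exact (isRoot_cyclotomic_iff).mpr (zeta_prim hm)
  rw [aeval_def, eval₂_eq_eval_map, map_cyclotomic]
  exact this

/-- if x^j ∈ 2T with j ≠ 0 then x ∈ 2T -/
lemma descend {m j : ℕ} (hm : Odd m) (hm0 : 0 < m) (hj : j ≠ 0) {x t : ℂ}
    (hx : x ∈ Algebra.adjoin ℤ ({zeta m} : Set ℂ))
    (ht : t ∈ Algebra.adjoin ℤ ({zeta m} : Set ℂ))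
    (heq : x ^ j = 2 * t) :
    ∃ s ∈ Algebra.adjoin ℤ ({zeta m} : Set ℂ), x = 2 * s := by
  rw [Algebra.adjoin_singleton_eq_range_aeval] at hx ht
  obtain ⟨P, hP'⟩ := hx
  obtain ⟨Q, hQ'⟩ := ht
  have hP : aeval (zeta m) P = x := hP'
  have hQ : aeval (zeta m) Q = t := hQ'
  have hdvd : cyclotomic m ℤ ∣ P ^ j - 2 * Q := by
    apply cyclo_dvd hm0
    rw [map_sub, map_pow, map_mul, hP, hQ, heq, map_ofNat]
    ring
  set φ := Int.castRingHom (ZMod 2) with hφ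
  have h2 : ((2 : ℤ[X]).map φ) = 0 := by
    have : ((2:ℤ[X])) = C 2 := by norm_num
    rw [this, map_C]
    norm_num
    rfl
  have hdvd2 : cyclotomic m (ZMod 2) ∣ (P.map φ) ^ j := by
    have := Polynomial.map_dvd φ hdvd
    rw [Polynomial.map_sub, Polynomial.map_mul, Polynomial.map_pow, map_cyclotomic, h2,
      zero_mul, sub_zero] at this
    exact this
  have hPdvd : cyclotomic m (ZMod 2) ∣ P.map φ := ((sqf hm).dvd_pow_iff_dvd hj).mp hdvd2
  obtain ⟨Wb, hW⟩ := hPdvd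
  obtain ⟨W, rfl⟩ := Polynomial.map_surjective φ ZMod.intCast_surjective Wb
  have hmap0 : (P - cyclotomic m ℤ * W).map φ = 0 := by
    rw [Polynomial.map_sub, Polynomial.map_mul, map_cyclotomic, ← hW, sub_self]
  have hCdvd : C (2:ℤ) ∣ P - cyclotomic m ℤ * W := by
    rw [Polynomial.C_dvd_iff_dvd_coeff]
    intro i
    have : φ ((P - cyclotomic m ℤ * W).coeff i) = 0 := by
      rw [← Polynomial.coeff_map, hmap0]; simp
    exact_mod_cast (ZMod.intCast_zmod_eq_zero_iff_dvd _ 2).mp this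
  obtain ⟨B, hB⟩ := hCdvd
  refine ⟨aeval (zeta m) B, ?_, ?_⟩
  · rw [Algebra.adjoin_singleton_eq_range_aeval]; exact ⟨B, rfl⟩
  · have : P = cyclotomic m ℤ * W + C 2 * B := by linear_combination hB
    calc x = aeval (zeta m) P := hP.symm
    _ = aeval (zeta m) (cyclotomic m ℤ) * aeval (zeta m) W + 2 * aeval (zeta m) B := by
        rw [this, map_add, map_mul, map_mul, aeval_C]
        norm_num
    _ = 2 * aeval (zeta m) B := by rw [aeval_cyclo hm0]; ring

lemma one_ne_two_mul {m : ℕ} (hm0 : 0 < m) {t : ℂ}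
    (ht : t ∈ Algebra.adjoin ℤ ({zeta m} : Set ℂ)) (heq : (1 : ℂ) = 2 * t) : False := by
  rw [Algebra.adjoin_singleton_eq_range_aeval] at ht
  obtain ⟨Q, hQ'⟩ := ht
  have hQ : aeval (zeta m) Q = t := hQ'
  have hdvd : cyclotomic m ℤ ∣ 2 * Q - 1 := by
    apply cyclo_dvd hm0
    rw [map_sub, map_mul, hQ, map_one, map_ofNat, ← heq]
    ring
  set φ := Int.castRingHom (ZMod 2) with hφ
  have h2 : ((2 : ℤ[X]).map φ) = 0 := by
    have : ((2:ℤ[X])) = C 2 := by norm_num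
    rw [this, map_C]
    norm_num
    rfl
  have hdvd2 : cyclotomic m (ZMod 2) ∣ (1 : (ZMod 2)[X]) := by
    have := Polynomial.map_dvd φ hdvd
    rw [Polynomial.map_sub, Polynomial.map_mul, map_cyclotomic, h2, zero_mul,
      Polynomial.map_one, zero_sub, dvd_neg] at this
    exact this
  have hu : IsUnit (cyclotomic m (ZMod 2)) := isUnit_of_dvd_one hdvd2
  have hdeg := natDegree_cyclotomic m (ZMod 2)
  rw [Polynomial.isUnit_iff] at hu
  obtain ⟨r, hr, hrc⟩ := hu
  have : (cyclotomic m (ZMod 2)).natDegree = 0 := by rw [← hrc]; simp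
  rw [hdeg] at this
  have := Nat.totient_pos.mpr hm0
  omega

lemma two_mem_T {m : ℕ} : (2:ℂ) ∈ Algebra.adjoin ℤ ({zeta m} : Set ℂ) := by
  have := Subalgebra.natCast_mem (Algebra.adjoin ℤ ({zeta m} : Set ℂ)) 2
  exact_mod_cast this

lemma add_pow_two_pow {m k : ℕ} {a b : ℂ}
    (ha : a ∈ Algebra.adjoin ℤ ({zeta m} : Set ℂ))
    (hb : b ∈ Algebra.adjoin ℤ ({zeta m} : Set ℂ)) :
    ∃ s ∈ Algebra.adjoin ℤ ({zeta m} : Set ℂ),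
      (a + b) ^ (2 ^ k) = a ^ (2 ^ k) + b ^ (2 ^ k) + 2 * s := by
  induction k with
  | zero => exact ⟨0, Subalgebra.zero_mem _, by ring⟩
  | succ k ih =>
      obtain ⟨s, hs, hseq⟩ := ih
      refine ⟨a ^ 2 ^ k * b ^ 2 ^ k + 2 * s ^ 2 + 2 * (a ^ 2 ^ k) * s + 2 * (b ^ 2 ^ k) * s,
        ?_, ?_⟩
      · apply Subalgebra.add_mem
        apply Subalgebra.add_mem
        apply Subalgebra.add_mem
        · exact mul_mem (pow_mem ha _) (pow_mem hb _)
        · exact mul_mem two_mem_T (pow_mem hs 2)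
        · exact mul_mem (mul_mem two_mem_T (pow_mem ha _)) hs
        · exact mul_mem (mul_mem two_mem_T (pow_mem hb _)) hs
      · have h1 : (2:ℕ) ^ (k+1) = 2 ^ k * 2 := by ring
        rw [h1, pow_mul, pow_mul, pow_mul, hseq]
        ring

lemma conj_mod_two {m l : ℕ} (hm0 : 0 < m) (hl : (2 : ZMod m) ^ l = -1) {x : ℂ}
    (hx : x ∈ Algebra.adjoin ℤ ({zeta m} : Set ℂ)) :
    ∃ t ∈ Algebra.adjoin ℤ ({zeta m} : Set ℂ),
      (starRingEnd ℂ) x = x ^ (2 ^ l) + 2 * t := by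
  induction hx using Algebra.adjoin_induction with
  | mem z hz =>
      rcases Set.mem_singleton_iff.mp hz with rfl
      exact ⟨0, Subalgebra.zero_mem _, by rw [zeta_conj_eq_pow hm0 hl]; ring⟩
  | algebraMap r =>
      have heven : Even (r - r ^ (2 ^ l)) := by
        rw [Int.even_sub, Int.even_pow]
        constructor
        · intro h; exact ⟨h, (pow_ne_zero l two_ne_zero)⟩
        · rintro ⟨h, -⟩; exact h
      obtain ⟨c, hc⟩ := heven
      refine ⟨(c : ℂ), ?_, ?_⟩
      · exact_mod_cast Subalgebra.intCast_mem _ c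
      · have hthis : (r : ℂ) - (r:ℂ) ^ (2^l) = 2 * c := by
          have := congrArg (Int.cast : ℤ → ℂ) hc
          push_cast at this
          linear_combination this
        have hconj : (starRingEnd ℂ) ((r : ℂ)) = (r:ℂ) := map_intCast _ r
        simp only [algebraMap_int_eq, eq_intCast, hconj]
        linear_combination hthis
  | add a b ha hb iha ihb =>
      obtain ⟨ta, hta, heqa⟩ := iha
      obtain ⟨tb, htb, heqb⟩ := ihb
      obtain ⟨s, hs, hseq⟩ := add_pow_two_pow ha hb
      refine ⟨ta + tb - s, by exact sub_mem (add_mem hta htb) hs, ?_⟩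
      rw [map_add, heqa, heqb, hseq]
      ring
  | mul a b ha hb iha ihb =>
      obtain ⟨ta, hta, heqa⟩ := iha
      obtain ⟨tb, htb, heqb⟩ := ihb
      refine ⟨ta * b ^ (2^l) + a ^ (2^l) * tb + 2 * ta * tb,
        add_mem (add_mem (mul_mem hta (pow_mem hb _)) (mul_mem (pow_mem ha _) htb))
          (mul_mem (mul_mem two_mem_T hta) htb), ?_⟩
      rw [map_mul, heqa, heqb, mul_pow]
      ring

lemma step {m l k : ℕ} (hm : Odd m) (hm0 : 0 < m) (hl : (2 : ZMod m) ^ l = -1)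
    {α : ℂ} (hα : α ∈ Algebra.adjoin ℤ ({zeta m} : Set ℂ))
    (heq : α * (starRingEnd ℂ) α = 2 ^ (2 * k + 1)) :
    ∃ β ∈ Algebra.adjoin ℤ ({zeta m} : Set ℂ),
      4 * (β * (starRingEnd ℂ) β) = 2 ^ (2 * k + 1) := by
  obtain ⟨t, ht, hconj⟩ := conj_mod_two hm0 hl hα
  have hpow : α ^ (2 ^ l + 1) = 2 * ((2:ℂ) ^ (2*k) - t * α) := by
    rw [pow_succ]
    linear_combination heq - α * hconj
  have hmem : (2:ℂ) ^ (2*k) - t * α ∈ Algebra.adjoin ℤ ({zeta m} : Set ℂ) :=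
    sub_mem (pow_mem two_mem_T _) (mul_mem ht hα)
  obtain ⟨β, hβ, hαβ⟩ := descend hm hm0 (Nat.succ_ne_zero _) hα hmem hpow
  refine ⟨β, hβ, ?_⟩
  have hc2 : (starRingEnd ℂ) (2:ℂ) = 2 := map_ofNat _ 2
  rw [hαβ, map_mul, hc2] at heq
  linear_combination heq

lemma no_alpha {m l : ℕ} (hm : Odd m) (hm0 : 0 < m) (hl : (2 : ZMod m) ^ l = -1) :
    ∀ k : ℕ, ∀ α ∈ Algebra.adjoin ℤ ({zeta m} : Set ℂ),
      α * (starRingEnd ℂ) α ≠ 2 ^ (2 * k + 1) := by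
  intro k
  induction k with
  | zero =>
      intro α hα heq
      obtain ⟨β, hβ, h4⟩ := step hm hm0 hl hα heq
      refine one_ne_two_mul hm0 (mul_mem hβ (conj_mem hβ hm0)) ?_
      linear_combination (-1/2 : ℂ) * h4
  | succ j ih =>
      intro α hα heq
      obtain ⟨β, hβ, h4⟩ := step hm hm0 hl hα heq
      refine ih β hβ ?_
      have h2 : (2:ℂ) ^ (2 * (j+1) + 1) = 4 * 2 ^ (2*j+1) := by ring
      rw [h2] at h4
      exact mul_left_cancel₀ (by norm_num) h4

lemma zeta_two_mul {m : ℕ} (hm : Odd m) : zeta (2 * m) = - zeta m ^ ((m+1)/2) := by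
  obtain ⟨j, hj⟩ := hm
  subst hj
  have hh : (2*j+1+1)/2 = j+1 := by omega
  rw [hh]
  unfold zeta
  rw [← Complex.exp_nat_mul]
  have hexp : ((j+1 : ℕ):ℂ) * (2 * (Real.pi:ℂ) * Complex.I / ((2*j+1 : ℕ):ℂ))
      = (Real.pi:ℂ) * Complex.I + 2 * (Real.pi:ℂ) * Complex.I / ((2*(2*j+1) : ℕ):ℂ) := by
    have hm0 : ((2:ℂ)*j+1) ≠ 0 := by
      have : ((2*j+1 : ℕ):ℂ) = 2*(j:ℂ)+1 := by push_cast; ring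
      rw [← this]
      norm_cast
    push_cast
    have hu := mul_inv_cancel₀ hm0
    rw [div_eq_mul_inv, div_eq_mul_inv, mul_inv]
    linear_combination (↑Real.pi * Complex.I) * hu
  rw [hexp, Complex.exp_add, Complex.exp_pi_mul_I]
  ring

lemma Wf_mem' {n M m : ℕ} (hz : zeta M ∈ Algebra.adjoin ℤ ({zeta m} : Set ℂ))
    (f : (Fin n → ZMod 2) → ZMod M) (y : Fin n → ZMod 2) :
    Wf f y ∈ Algebra.adjoin ℤ ({zeta m} : Set ℂ) := by
  apply Subalgebra.sum_mem
  intro x _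
  exact mul_mem (pow_mem (neg_mem (Subalgebra.one_mem _)) _) (pow_mem hz _)

lemma Wf_mul_conj {n M : ℕ} {f : (Fin n → ZMod 2) → ZMod M} (hf : IsGBF f) :
    Wf f 0 * (starRingEnd ℂ) (Wf f 0) = 2 ^ n := by
  rw [Complex.mul_conj, Complex.normSq_eq_norm_sq, hf 0]
  have h1 : ((2:ℝ) ^ ((n:ℝ)/2)) ^ 2 = (2:ℝ) ^ (n:ℕ) := by
    rw [← Real.rpow_natCast ((2:ℝ) ^ ((n:ℝ)/2)) 2, ← Real.rpow_mul (by norm_num)]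
    rw [show ((n:ℝ)/2 * ((2:ℕ):ℝ)) = (n:ℝ) by push_cast; ring, Real.rpow_natCast]
  rw [h1]
  push_cast
  ring

end Stmt10Aux

theorem stmt10 {m n : ℕ} (hm : Odd m) (hm3 : 3 ≤ m)
    (h : ∃ l : ℕ, 0 < l ∧ (2 : ZMod m) ^ l = -1)
    (hn : Odd n) (hn1 : 1 ≤ n) :
    (¬ ∃ α ∈ Algebra.adjoin ℤ ({zeta m} : Set ℂ), α * (starRingEnd ℂ) α = 2 ^ n) ∧
    (¬ ∃ f : (Fin n → ZMod 2) → ZMod m, IsGBF f) ∧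
    (¬ ∃ f : (Fin n → ZMod 2) → ZMod (2 * m), IsGBF f) := by
  obtain ⟨l, hl0, hl⟩ := h
  have hm0 : 0 < m := by omega
  obtain ⟨k, hk⟩ := hn
  have part1 : ¬ ∃ α ∈ Algebra.adjoin ℤ ({zeta m} : Set ℂ),
      α * (starRingEnd ℂ) α = 2 ^ n := by
    rintro ⟨α, hα, heq⟩
    rw [hk] at heq
    exact Stmt10Aux.no_alpha hm hm0 hl k α hα heq
  refine ⟨part1, ?_, ?_⟩
  · rintro ⟨f, hf⟩
    exact part1 ⟨Wf f 0,
      Stmt10Aux.Wf_mem' (Algebra.self_mem_adjoin_singleton ℤ _) f 0,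
      Stmt10Aux.Wf_mul_conj hf⟩
  · rintro ⟨f, hf⟩
    refine part1 ⟨Wf f 0, ?_, Stmt10Aux.Wf_mul_conj hf⟩
    refine Stmt10Aux.Wf_mem' ?_ f 0
    rw [Stmt10Aux.zeta_two_mul hm]
    exact neg_mem (pow_mem (Algebra.self_mem_adjoin_singleton ℤ _) _)
end

section
/- Let m = p_1^{a_1}···p_s^{a_s} with distinct odd primes p_i, and let d_i be the multiplicative order of 2 modulo p_i. Then there exists a positive integer l with 2^l ≡ −1 (mod m) if and only if the 2-adic valuations V_2(d_1), ..., V_2(d_s) are all equal to the same integer r ≥ 1. -/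
open Finset

private lemma val2_mono {x y : ℕ} (hy : y ≠ 0) (h : x ∣ y) :
    padicValNat 2 x ≤ padicValNat 2 y := by
  haveI : Fact (Nat.Prime 2) := ⟨Nat.prime_two⟩
  exact (padicValNat_dvd_iff_le hy).mp (pow_padicValNat_dvd.trans h)

private lemma val2_eq {d t e : ℕ} (hd : d ≠ 0) (he : e ≠ 0) (ht : Odd t)
    (h1 : d ∣ e) (h2 : e ∣ d * t) : padicValNat 2 e = padicValNat 2 d := by
  have ht0 : t ≠ 0 := by rintro rfl; simp at ht
  have htd : ¬ (2 ∣ t) := by rw [Nat.two_dvd_ne_zero]; exact Nat.odd_iff.mp ht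
  have h3 := val2_mono (mul_ne_zero hd ht0) h2
  rw [padicValNat.mul hd ht0, padicValNat.eq_zero_of_not_dvd (p := 2) (n := t) htd,
    add_zero] at h3
  exact le_antisymm h3 (val2_mono he h1)

private lemma val2_succ {d l : ℕ} (hl : l ≠ 0) (h2 : d ∣ 2 * l) (h1 : ¬ d ∣ l) :
    padicValNat 2 d = padicValNat 2 l + 1 := by
  haveI : Fact (Nat.Prime 2) := ⟨Nat.prime_two⟩
  have hd : d ≠ 0 := by rintro rfl; rw [zero_dvd_iff] at h2; omega
  have hub : padicValNat 2 d ≤ padicValNat 2 l + 1 := by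
    have := val2_mono (mul_ne_zero two_ne_zero hl) h2
    rwa [padicValNat.mul two_ne_zero hl, padicValNat.self one_lt_two, add_comm] at this
  refine le_antisymm hub (by_contra fun h => h1 ?_)
  push_neg at h
  have hle : padicValNat 2 d ≤ padicValNat 2 l := by omega
  set v := padicValNat 2 d with hv
  have hfac : d.factorization 2 = v := Nat.factorization_def d Nat.prime_two
  have hsplit : 2 ^ v * (d / 2 ^ v) = d := by
    have := Nat.ordProj_mul_ordCompl_eq_self d 2
    rwa [hfac] at this
  have hnd : ¬ (2 ∣ d / 2 ^ v) := by
    have := Nat.not_dvd_ordCompl Nat.prime_two hd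
    rwa [hfac] at this
  have hcop : Nat.Coprime 2 (d / 2 ^ v) := (Nat.prime_two.coprime_iff_not_dvd).mpr hnd
  have hc_dvd : d / 2 ^ v ∣ l := by
    refine Nat.Coprime.dvd_of_dvd_mul_left hcop.symm ?_
    exact dvd_trans (Dvd.intro_left _ hsplit) h2
  have hp_dvd : 2 ^ v ∣ l := dvd_trans (pow_dvd_pow 2 hle) pow_padicValNat_dvd
  calc d = 2 ^ v * (d / 2 ^ v) := hsplit.symm
    _ ∣ l := Nat.Coprime.mul_dvd_of_dvd_of_dvd (Nat.Coprime.pow_left _ hcop) hp_dvd hc_dvd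

private lemma lift_pow {p : ℕ} (hp : p.Prime) {x : ℤ} {k : ℕ} (hk : 1 ≤ k)
    (h : (p:ℤ)^k ∣ x - 1) : (p:ℤ)^(k+1) ∣ x^p - 1 := by
  have hgeom : (∑ i ∈ range p, x ^ i) * (x - 1) = x ^ p - 1 := geom_sum_mul x p
  have hp1 : (p:ℤ) ∣ x - 1 := dvd_trans (dvd_pow_self _ (by omega)) h
  have hsum : (p:ℤ) ∣ ∑ i ∈ range p, x ^ i := by
    have hA : (p:ℤ) ∣ ∑ i ∈ range p, (x ^ i - 1) :=
      Finset.dvd_sum fun i _ => hp1.trans (by simpa using sub_dvd_pow_sub_pow x 1 i)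
    have hB : (∑ i ∈ range p, (x ^ i - 1)) = (∑ i ∈ range p, x ^ i) - p := by
      rw [Finset.sum_sub_distrib]; simp
    rw [hB] at hA
    simpa using dvd_add hA (dvd_refl (p:ℤ))
  rw [← hgeom, pow_succ']
  exact mul_dvd_mul hsum h

private lemma two_split {n : ℕ} (hn : n ≠ 0) :
    2 ^ padicValNat 2 n * (n / 2 ^ padicValNat 2 n) = n ∧ ¬ 2 ∣ n / 2 ^ padicValNat 2 n := by
  have hfac : n.factorization 2 = padicValNat 2 n := Nat.factorization_def n Nat.prime_two
  constructor
  · have := Nat.ordProj_mul_ordCompl_eq_self n 2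
    rwa [hfac] at this
  · have := Nat.not_dvd_ordCompl Nat.prime_two hn
    rwa [hfac] at this

private lemma lift_iter {p d : ℕ} (hp : p.Prime) (hd : (p:ℤ) ∣ 2^d - 1) (b : ℕ) :
    (p:ℤ)^(b+1) ∣ 2^(d * p^b) - 1 := by
  induction b with
  | zero => simpa using hd
  | succ b ih =>
    have h := lift_pow hp (k := b+1) (by omega) ih
    rw [← pow_mul] at h
    have he : d * p ^ b * p = d * p ^ (b + 1) := by ring
    rwa [he] at h

private lemma pow_one_iff {n k : ℕ} : (2 : ZMod n)^k = 1 ↔ (n:ℤ) ∣ 2^k - 1 := by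
  rw [← ZMod.intCast_zmod_eq_zero_iff_dvd]
  push_cast
  rw [sub_eq_zero]

private lemma pow_neg_one_iff {n l : ℕ} : (2 : ZMod n)^l = -1 ↔ (n:ℤ) ∣ 2^l + 1 := by
  rw [← ZMod.intCast_zmod_eq_zero_iff_dvd]
  push_cast
  rw [add_eq_zero_iff_eq_neg]
private lemma order_pow_facts {P A : ℕ} (hP : P.Prime) (hodd : Odd P) (hA : 1 ≤ A) :
    orderOf (2 : ZMod (P^A)) ≠ 0 ∧
    padicValNat 2 (orderOf (2 : ZMod (P^A))) = padicValNat 2 (orderOf (2 : ZMod P)) := by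
  have hP2 : ¬ (2 ∣ P) := by
    rw [Nat.two_dvd_ne_zero]; exact Nat.odd_iff.mp hodd
  have hcop : Nat.Coprime 2 (P^A) :=
    Nat.Coprime.pow_right _ ((Nat.prime_two.coprime_iff_not_dvd).mpr hP2)
  have hPA0 : 0 < P^A := pow_pos hP.pos A
  set e := orderOf (2 : ZMod (P^A)) with hedef
  have hfin : IsOfFinOrder (2 : ZMod (P^A)) := by
    refine isOfFinOrder_iff_pow_eq_one.mpr ⟨Nat.totient (P^A), Nat.totient_pos.mpr hPA0, ?_⟩
    have := Nat.ModEq.pow_totient hcop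
    have h2 := (ZMod.natCast_eq_natCast_iff _ _ _).mpr this
    push_cast at h2
    exact h2
  have he0 : e ≠ 0 := (orderOf_pos_iff.mpr hfin).ne'
  -- order mod P divides e
  have hde : orderOf (2 : ZMod P) ∣ e := by
    apply orderOf_dvd_of_pow_eq_one
    rw [pow_one_iff]
    have h1 : ((P^A : ℕ):ℤ) ∣ 2^e - 1 := pow_one_iff.mp (pow_orderOf_eq_one _)
    push_cast at h1
    exact (dvd_pow_self (P:ℤ) (by omega)).trans h1
  have hd0 : orderOf (2 : ZMod P) ≠ 0 := by
    rintro h; rw [h] at hde; exact he0 (zero_dvd_iff.mp hde)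
  have hed : e ∣ orderOf (2 : ZMod P) * P^(A-1) := by
    apply orderOf_dvd_of_pow_eq_one
    rw [pow_one_iff]
    have h1 : (P:ℤ) ∣ 2^(orderOf (2 : ZMod P)) - 1 := by
      have := pow_one_iff.mp (pow_orderOf_eq_one (2 : ZMod P))
      exact_mod_cast this
    have h2 := lift_iter hP h1 (A-1)
    have hA1 : A - 1 + 1 = A := by omega
    rw [hA1] at h2
    push_cast
    exact h2
  exact ⟨he0, val2_eq hd0 he0 (hodd.pow) hde hed⟩

private lemma neg_one_pow_half {P A : ℕ} (hP : P.Prime) (hodd : Odd P) (hA : 1 ≤ A)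
    (he0 : orderOf (2 : ZMod (P^A)) ≠ 0) (hev : 2 ∣ orderOf (2 : ZMod (P^A))) :
    (2 : ZMod (P^A)) ^ (orderOf (2 : ZMod (P^A)) / 2) = -1 := by
  set e := orderOf (2 : ZMod (P^A)) with hedef
  set h := e / 2 with hhdef
  have hhe : 2 * h = e := Nat.mul_div_cancel' hev
  have hh0 : h ≠ 0 := by omega
  have hhlt : h < e := by omega
  set x : ℤ := 2 ^ h with hxdef
  have hfull : ((P:ℤ))^A ∣ (x - 1) * (x + 1) := by
    have h1 : ((P^A : ℕ):ℤ) ∣ 2^e - 1 := pow_one_iff.mp (pow_orderOf_eq_one _)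
    push_cast at h1
    have hx2 : x ^ 2 = 2 ^ e := by rw [hxdef, ← pow_mul, mul_comm, hhe]
    have : (x - 1) * (x + 1) = 2 ^ e - 1 := by rw [← hx2]; ring
    rwa [this]
  have hnot : ¬ ((P:ℤ)^A ∣ x - 1) := by
    intro hc
    have : (2 : ZMod (P^A)) ^ h = 1 := by
      rw [pow_one_iff]; push_cast; exact hc
    have := orderOf_dvd_of_pow_eq_one this
    exact absurd (Nat.le_of_dvd (by omega) this) (by omega)
  have hPi : Prime (P:ℤ) := Nat.prime_iff_prime_int.mp hP
  by_cases hcase : (P:ℤ) ∣ x - 1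
  · exfalso
    have hn1 : ¬ ((P:ℤ) ∣ x + 1) := by
      intro hc
      have : (P:ℤ) ∣ 2 := by
        have := dvd_sub hc hcase
        simpa using this
      have h2 : (P:ℤ) ∣ ((2:ℕ):ℤ) := by exact_mod_cast this
      have hPne2 : P ≠ 2 := by
        rintro rfl
        have := Nat.odd_iff.mp hodd
        omega
      exact hPne2 ((Nat.prime_dvd_prime_iff_eq hP Nat.prime_two).mp (Int.ofNat_dvd.mp h2))
    have hcop : IsCoprime ((P:ℤ)^A) (x + 1) :=
      IsCoprime.pow_left (hPi.coprime_iff_not_dvd.mpr hn1)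
    exact hnot (hcop.dvd_of_dvd_mul_left (by rwa [mul_comm] at hfull))
  · have hcop : IsCoprime ((P:ℤ)^A) (x - 1) :=
      IsCoprime.pow_left (hPi.coprime_iff_not_dvd.mpr hcase)
    have : (P:ℤ)^A ∣ x + 1 := hcop.dvd_of_dvd_mul_left hfull
    rw [pow_neg_one_iff]
    push_cast
    exact this

theorem stmt11 {s : ℕ} (hs : 0 < s) (p a : Fin s → ℕ)
    (hp : ∀ i, (p i).Prime) (hodd : ∀ i, Odd (p i)) (hinj : Function.Injective p)
    (ha : ∀ i, 1 ≤ a i) (m : ℕ) (hm : m = ∏ i, p i ^ a i) :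
    (∃ l : ℕ, 0 < l ∧ (2 : ZMod m) ^ l = -1) ↔
      ∃ r : ℕ, 1 ≤ r ∧ ∀ i, padicValNat 2 (orderOf (2 : ZMod (p i))) = r := by
  constructor
  · rintro ⟨l, hl, hpow⟩
    refine ⟨padicValNat 2 l + 1, by omega, fun i => ?_⟩
    haveI : Fact (p i).Prime := ⟨hp i⟩
    haveI : Fact (2 < p i) := ⟨by
      have h2 := (hp i).two_le
      have h3 := Nat.odd_iff.mp (hodd i)
      omega⟩
    have hpm : (p i : ℤ) ∣ (m : ℤ) := by
      rw [hm]
      push_cast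
      exact (dvd_pow_self (p i : ℤ) (by have := ha i; omega)).trans
        (Finset.dvd_prod_of_mem _ (mem_univ i))
    have h1 : (2 : ZMod (p i))^l = -1 :=
      pow_neg_one_iff.mpr (hpm.trans (pow_neg_one_iff.mp hpow))
    have h2 : orderOf (2 : ZMod (p i)) ∣ 2 * l := by
      apply orderOf_dvd_of_pow_eq_one
      rw [mul_comm, pow_mul, h1]
      ring
    have h3 : ¬ orderOf (2 : ZMod (p i)) ∣ l := by
      intro hdvd
      have := orderOf_dvd_iff_pow_eq_one.mp hdvd
      rw [h1] at this
      exact CharP.neg_one_ne_one (R := ZMod (p i)) (p i) this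
    exact val2_succ hl.ne' h2 h3
  · rintro ⟨r, hr, hval⟩
    set e : Fin s → ℕ := fun i => orderOf (2 : ZMod (p i ^ a i)) with hedef
    have hfacts : ∀ i, e i ≠ 0 ∧ padicValNat 2 (e i) = r := fun i => by
      obtain ⟨h1, h2⟩ := order_pow_facts (hp i) (hodd i) (ha i)
      exact ⟨h1, by rw [h2, hval i]⟩
    set o : Fin s → ℕ := fun i => e i / 2 ^ r with hodef
    have hsplit : ∀ i, 2 ^ r * o i = e i ∧ ¬ 2 ∣ o i := fun i => by
      have := two_split (hfacts i).1
      rwa [(hfacts i).2] at this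
    have ho0 : ∀ i, o i ≠ 0 := fun i => by
      intro h
      have := (hsplit i).1
      rw [h, mul_zero] at this
      exact (hfacts i).1 this.symm
    refine ⟨2 ^ (r-1) * ∏ j, o j, ?_, ?_⟩
    · have : ∀ j ∈ (univ : Finset (Fin s)), o j ≠ 0 := fun j _ => ho0 j
      have hprod : (∏ j, o j) ≠ 0 := Finset.prod_ne_zero_iff.mpr this
      positivity
    · rw [pow_neg_one_iff]
      have hdvd : ∀ i, ((p i ^ a i : ℕ) : ℤ) ∣ 2 ^ (2 ^ (r-1) * ∏ j, o j) + 1 := by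
        intro i
        rw [← pow_neg_one_iff]
        have hev : 2 ∣ e i := by
          apply dvd_of_one_le_padicValNat (p := 2)
          rw [(hfacts i).2]; omega
        have hhalf := neg_one_pow_half (hp i) (hodd i) (ha i) (hfacts i).1 hev
        have hkey : 2 ^ (r-1) * ∏ j, o j = (e i / 2) * ∏ j ∈ univ.erase i, o j := by
          have h1 : e i = 2 * (2 ^ (r-1) * o i) := by
            rw [← (hsplit i).1, ← mul_assoc, ← pow_succ']
            congr 2
            omega
          have h2 : e i / 2 = 2 ^ (r-1) * o i := by omega
          rw [h2, ← Finset.mul_prod_erase _ _ (mem_univ i)]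
          ring
        have htodd : Odd (∏ j ∈ univ.erase i, o j) := by
          rw [Nat.odd_iff, ← Nat.two_dvd_ne_zero]
          intro hc
          obtain ⟨j, _, hj⟩ := (Nat.prime_iff.mp Nat.prime_two).dvd_finset_prod_iff _ |>.mp hc
          exact (hsplit j).2 hj
        rw [hkey, pow_mul, hhalf, Odd.neg_one_pow htodd]
      have hcopr : (↑(univ : Finset (Fin s)) : Set (Fin s)).Pairwise
          (Function.onFun IsCoprime fun i => ((p i ^ a i : ℕ) : ℤ)) := by
        intro i _ j _ hij
        have hc : Nat.Coprime (p i) (p j) :=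
          (Nat.coprime_primes (hp i) (hp j)).mpr (fun h => hij (hinj h))
        exact Nat.isCoprime_iff_coprime.mpr (Nat.Coprime.pow _ _ hc)
      have := Finset.prod_dvd_of_coprime hcopr (fun i _ => hdvd i)
      have hcast : (m : ℤ) = ∏ i, ((p i ^ a i : ℕ) : ℤ) := by
        rw [hm]; push_cast; rfl
      rwa [hcast]
end
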